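/- For every nonempty finite subset e ⊆ V with |e| ≤ N and every v ∈ e, the tuples in β(e) whose first coordinate equals v make up exactly a 1/|e| fraction of β(e); precisely, |e| · |{i ∈ β(e) : i_1 = v}| = |β(e)|. -/

import Mathlib

/-- The set of ordered blowups of a finite subset `e` of the vertex set `V`:
all `N`-tuples of vertices whose set of entries is exactly `e`. -/
def blowups (V : Type*) [Fintype V] [DecidableEq V] (N : ℕ) (e : Finset V) :
    Finset (Fin N → V) :=
  Finset.univ.filter (fun i => ∀ v : V, v ∈ e ↔ ∃ k : Fin N, i k = v)

lemma mem_blowups_swap {V : Type*} [Fintype V] [DecidableEq V] {N : ℕ}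
    {e : Finset V} {v w : V} (hv : v ∈ e) (hw : w ∈ e) {i : Fin N → V}
    (hi : i ∈ blowups V N e) : (Equiv.swap v w ∘ i) ∈ blowups V N e := by
  simp only [blowups, Finset.mem_filter, Finset.mem_univ, true_and] at hi ⊢
  intro u
  have hswap : Equiv.swap v w u ∈ e ↔ u ∈ e := by
    rcases eq_or_ne u v with rfl | huv
    · simp [hv, hw, Equiv.swap_apply_left]
    rcases eq_or_ne u w with rfl | huw
    · simp [hv, hw, Equiv.swap_apply_right]
    · rw [Equiv.swap_apply_of_ne_of_ne huv huw]
  constructor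
  · intro hu
    obtain ⟨k, hk⟩ := (hi (Equiv.swap v w u)).mp (by rwa [hswap])
    exact ⟨k, by simp [Function.comp, hk]⟩
  · rintro ⟨k, hk⟩
    have : Equiv.swap v w (i k) = u := hk
    have : i k = Equiv.swap v w u := by
      rw [← this, Equiv.swap_apply_self]
    rw [← hswap]
    exact (hi _).mpr ⟨k, this⟩

lemma blowups_fiber_card {V : Type*} [Fintype V] [DecidableEq V] {N : ℕ}
    (k : Fin N) {e : Finset V} {v w : V} (hv : v ∈ e) (hw : w ∈ e) :
    ((blowups V N e).filter (fun i => i k = v)).card =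
      ((blowups V N e).filter (fun i => i k = w)).card := by
  apply Finset.card_bij (fun i _ => Equiv.swap v w ∘ i)
  · intro i hi
    simp only [Finset.mem_filter] at hi ⊢
    refine ⟨mem_blowups_swap hv hw hi.1, ?_⟩
    simp [Function.comp, hi.2, Equiv.swap_apply_left]
  · intro a ha b hb hab
    funext x
    have := congrFun hab x
    simpa using (Equiv.swap v w).injective this
  · intro b hb
    simp only [Finset.mem_filter] at hb
    refine ⟨Equiv.swap v w ∘ b, Finset.mem_filter.mpr ⟨mem_blowups_swap hv hw hb.1, ?_⟩, ?_⟩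
    · simp [Function.comp, hb.2, Equiv.swap_apply_right]
    · funext x; simp [Function.comp, Equiv.swap_apply_self]

/-- For every nonempty `e ⊆ V` with `|e| ≤ N` and every `v ∈ e`, the tuples in
`β(e)` whose first coordinate equals `v` make up exactly a `1/|e|` fraction of
`β(e)`: `|e| ⬝ |{i ∈ β(e) : i₁ = v}| = |β(e)|`. -/
theorem blowups_first_coord_fraction (V : Type*) [Fintype V] [DecidableEq V]
    (N : ℕ) (hN : 2 ≤ N) (e : Finset V) (he : e.Nonempty) (hcard : e.card ≤ N)
    (v : V) (hv : v ∈ e) :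
    e.card * ((blowups V N e).filter (fun i => i ⟨0, by omega⟩ = v)).card =
      (blowups V N e).card := by
  set k : Fin N := ⟨0, by omega⟩
  have htotal : (blowups V N e).card =
      ∑ w ∈ e, ((blowups V N e).filter (fun i => i k = w)).card := by
    apply Finset.card_eq_sum_card_fiberwise
    intro i hi
    simp only [blowups, Finset.mem_coe, Finset.mem_filter, Finset.mem_univ, true_and] at hi
    exact (hi (i k)).mpr ⟨k, rfl⟩
  rw [htotal]
  rw [Finset.sum_congr rfl (fun w hw => blowups_fiber_card k hw hv)]
  rw [Finset.sum_const, smul_eq_mul]
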